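/- Let Θ be a measurable space, K ≥ 1, let μ_pr^K be the K-fold product of a probability measure μ_pr on Θ, let π : Θ^K → [0,∞) be measurable with ∫ π dμ_pr^K = 1, and let μ be the probability measure on Θ^K with density π with respect to μ_pr^K. Let S_K be a subgroup of the symmetric group on {1,…,K}, and define r^{UW}(θ,σ) := π(θ_σ)/Σ_{σ'∈S_K} π(θ_{σ'}) when the denominator is positive and r^{UW}(θ,σ) := 1/|S_K| otherwise. Then the unweighted swapping kernel q^{UW}(θ, B) := Σ_{σ∈S_K} r^{UW}(θ,σ) δ_{θ_σ}(B) is a Markov kernel on Θ^K that is reversible with respect to μ: for all measurable sets A, B ⊆ Θ^K, ∫_A q^{UW}(θ, B) μ(dθ) = ∫_B q^{UW}(θ, A) μ(dθ). -/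

import Mathlib

open MeasureTheory ProbabilityTheory ENNReal

/-- the unweighted swapping kernel
`q^{UW}(θ,B) = ∑_{σ∈S_K} r^{UW}(θ,σ) δ_{θ_σ}(B)`, with
`r^{UW}(θ,σ) = π(θ_σ)/∑_{σ'∈S_K} π(θ_{σ'})` (and `1/|S_K|` if the denominator
vanishes), is a Markov kernel on `Θ^K` reversible with respect to the measure `μ`
with density `π` w.r.t. the `K`-fold product prior. -/
theorem unweighted_swapping_kernel_reversible
    {Θ : Type*} [MeasurableSpace Θ] (K : ℕ) (hK : 1 ≤ K)
    (μpr : Measure Θ) [IsProbabilityMeasure μpr]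
    (μprK : Measure (Fin K → Θ)) (hμprK : μprK = Measure.pi fun _ => μpr)
    (π : (Fin K → Θ) → ℝ≥0∞) (hπm : Measurable π) (hπfin : ∀ θ, π θ ≠ ∞)
    (hπint : ∫⁻ θ, π θ ∂μprK = 1)
    (μ : Measure (Fin K → Θ)) (hμ : μ = μprK.withDensity π)
    (SK : Finset (Equiv.Perm (Fin K)))
    (hSKid : 1 ∈ SK)
    (hSKinv : ∀ σ ∈ SK, σ⁻¹ ∈ SK)
    (hSKmul : ∀ σ ∈ SK, ∀ ρ ∈ SK, σ * ρ ∈ SK)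
    (r : (Fin K → Θ) → Equiv.Perm (Fin K) → ℝ≥0∞)
    (hr : ∀ θ σ, r θ σ =
      if 0 < ∑ σ' ∈ SK, π (fun i => θ (σ' i)) then
        π (fun i => θ (σ i)) / ∑ σ' ∈ SK, π (fun i => θ (σ' i))
      else (SK.card : ℝ≥0∞)⁻¹)
    (q : (Fin K → Θ) → Measure (Fin K → Θ))
    (hq : ∀ θ, q θ = ∑ σ ∈ SK, r θ σ • Measure.dirac (fun i => θ (σ i))) :
    (∀ θ, IsProbabilityMeasure (q θ)) ∧
    (∀ B : Set (Fin K → Θ), MeasurableSet B → Measurable fun θ => q θ B) ∧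
    (∀ A B : Set (Fin K → Θ), MeasurableSet A → MeasurableSet B →
      ∫⁻ θ in A, q θ B ∂μ = ∫⁻ θ in B, q θ A ∂μ) := by
  -- notation
  set S : (Fin K → Θ) → ℝ≥0∞ := fun θ => ∑ σ' ∈ SK, π (fun i => θ (σ' i)) with hSdef
  -- measurability of permutation maps
  have hpermm : ∀ σ : Equiv.Perm (Fin K),
      Measurable (fun θ : Fin K → Θ => fun i => θ (σ i)) := fun σ =>
    measurable_pi_lambda _ fun i => measurable_pi_apply _
  have hSm : Measurable S :=
    Finset.measurable_sum _ fun σ _ => hπm.comp (hpermm σ)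
  have hSfin : ∀ θ, S θ ≠ ∞ := by
    intro θ
    exact ENNReal.sum_ne_top.2 fun σ _ => hπfin _
  have hπleS : ∀ θ, π θ ≤ S θ := by
    intro θ
    have h1 : π (fun i => θ ((1 : Equiv.Perm (Fin K)) i)) ≤ S θ :=
      Finset.single_le_sum (f := fun σ' => π (fun i => θ (σ' i)))
        (fun _ _ => zero_le) hSKid
    simpa using h1
  -- key rewriting of r θ σ * π θ
  have hr' : ∀ θ σ, r θ σ * π θ = π (fun i => θ (σ i)) * π θ / S θ := by
    intro θ σ
    rw [hr]
    by_cases h : 0 < S θ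
    · rw [if_pos h, div_eq_mul_inv, div_eq_mul_inv]
      ring
    · rw [if_neg h]
      have hS0 : S θ = 0 := by simpa using h
      have hπ0 : π θ = 0 := le_antisymm (hS0 ▸ hπleS θ) zero_le
      simp [hπ0]
  -- invariance of S under permutations in SK
  have hSperm : ∀ σ ∈ SK, ∀ θ : Fin K → Θ, S (fun i => θ (σ i)) = S θ := by
    intro σ hσ θ
    simp only [hSdef]
    refine Finset.sum_equiv (Equiv.mulLeft σ) (fun ρ => ?_) (fun ρ hρ => ?_)
    · constructor
      · intro hρ; exact hSKmul σ hσ ρ hρ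
      · intro hρ
        have := hSKmul _ (hSKinv σ hσ) _ hρ
        simpa using this
    · congr 1
  -- q θ B as a finite sum of weighted indicators
  have hqB : ∀ (B : Set (Fin K → Θ)), MeasurableSet B → ∀ θ,
      q θ B = ∑ σ ∈ SK, r θ σ * B.indicator 1 (fun i => θ (σ i)) := by
    intro B hB θ
    rw [hq, Measure.finset_sum_apply]
    refine Finset.sum_congr rfl fun σ _ => ?_
    rw [Measure.smul_apply, Measure.dirac_apply' _ hB, smul_eq_mul]
  have hSKne : (SK.card : ℝ≥0∞) ≠ 0 := by
    simp [Finset.card_ne_zero_of_mem hSKid]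
  -- part 1: probability measure
  have part1 : ∀ θ, IsProbabilityMeasure (q θ) := by
    intro θ
    constructor
    have := hqB Set.univ MeasurableSet.univ θ
    simp only [Set.indicator_univ, Pi.one_apply, mul_one] at this
    rw [this]
    by_cases h : 0 < S θ
    · have : ∀ σ ∈ SK, r θ σ = π (fun i => θ (σ i)) * (S θ)⁻¹ := by
        intro σ _
        rw [hr, if_pos h, div_eq_mul_inv]
      rw [Finset.sum_congr rfl this, ← Finset.sum_mul]
      exact ENNReal.mul_inv_cancel h.ne' (hSfin θ)
    · have : ∀ σ ∈ SK, r θ σ = (SK.card : ℝ≥0∞)⁻¹ := by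
        intro σ _; rw [hr, if_neg h]
      rw [Finset.sum_congr rfl this, Finset.sum_const, nsmul_eq_mul]
      exact ENNReal.mul_inv_cancel hSKne (natCast_ne_top _)
  -- measurability of r
  have hrm : ∀ σ, Measurable fun θ => r θ σ := by
    intro σ
    simp only [hr]
    exact Measurable.ite (measurableSet_lt measurable_const hSm)
      ((hπm.comp (hpermm σ)).div hSm) measurable_const
  -- part 2: measurability
  have part2 : ∀ B : Set (Fin K → Θ), MeasurableSet B →
      Measurable fun θ => q θ B := by
    intro B hB
    simp only [hqB B hB]
    exact Finset.measurable_sum _ fun σ _ =>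
      (hrm σ).mul ((measurable_one.indicator hB).comp (hpermm σ))
  refine ⟨part1, part2, ?_⟩
  -- measurability of the integrands
  have hgm : ∀ (σ : Equiv.Perm (Fin K)) (A B : Set (Fin K → Θ)),
      MeasurableSet A → MeasurableSet B →
      Measurable (fun θ : Fin K → Θ => A.indicator 1 θ *
        (B.indicator 1 (fun i => θ (σ i)) *
          (π (fun i => θ (σ i)) * π θ / S θ))) := by
    intro σ A B hA hB
    exact (measurable_one.indicator hA).mul
      (((measurable_one.indicator hB).comp (hpermm σ)).mul
        (((hπm.comp (hpermm σ)).mul hπm).div hSm))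
  -- measure preservation of permutations
  have hmp : ∀ σ : Equiv.Perm (Fin K),
      MeasurePreserving (fun θ : Fin K → Θ => fun i => θ (σ i)) μprK μprK := by
    intro σ
    have h := measurePreserving_piCongrLeft (fun _ : Fin K => μpr)
      ((σ⁻¹ : Equiv.Perm (Fin K)) : Fin K ≃ Fin K)
    have heq : ⇑(MeasurableEquiv.piCongrLeft (fun _ : Fin K => Θ)
        ((σ⁻¹ : Equiv.Perm (Fin K)) : Fin K ≃ Fin K))
        = fun θ : Fin K → Θ => fun i => θ (σ i) := by
      funext θ i
      have : i = ((σ⁻¹ : Equiv.Perm (Fin K)) : Fin K ≃ Fin K) (σ i) := by simp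
      rw [this, MeasurableEquiv.piCongrLeft_apply_apply]
      simp
    rw [heq] at h
    rw [hμprK]
    exact h
  -- main computation: the set-integral as a sum of integrals
  have main : ∀ (A B : Set (Fin K → Θ)), MeasurableSet A → MeasurableSet B →
      ∫⁻ θ in A, q θ B ∂μ
        = ∑ σ ∈ SK, ∫⁻ θ, A.indicator 1 θ *
            (B.indicator 1 (fun i => θ (σ i)) *
              (π (fun i => θ (σ i)) * π θ / S θ)) ∂μprK := by
    intro A B hA hB
    rw [hμ, setLIntegral_withDensity_eq_setLIntegral_mul _ hπm (part2 B hB) hA,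
      ← lintegral_indicator hA, ← lintegral_finset_sum _ (fun σ _ => hgm σ A B hA hB)]
    congr 1
    funext θ
    by_cases hθ : θ ∈ A
    · simp only [Set.indicator_of_mem hθ, Pi.one_apply, Pi.mul_apply, one_mul]
      rw [hqB B hB θ, Finset.mul_sum]
      refine Finset.sum_congr rfl fun σ _ => ?_
      rw [mul_comm (π θ), mul_assoc, ← hr' θ σ]
      ring
    · simp [Set.indicator_of_notMem hθ]
  -- the swap identity for each σ
  have swap : ∀ σ ∈ SK, ∀ (A B : Set (Fin K → Θ)), MeasurableSet A → MeasurableSet B →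
      ∫⁻ θ, A.indicator 1 θ * (B.indicator 1 (fun i => θ (σ i)) *
          (π (fun i => θ (σ i)) * π θ / S θ)) ∂μprK
        = ∫⁻ θ, B.indicator 1 θ * (A.indicator 1 (fun i => θ (σ⁻¹ i)) *
            (π (fun i => θ (σ⁻¹ i)) * π θ / S θ)) ∂μprK := by
    intro σ hσ A B hA hB
    have hcomp := (hmp σ).lintegral_comp (hgm σ⁻¹ B A hB hA)
    rw [← hcomp]
    congr 1
    funext θ
    have h1 : (fun i => θ (σ (σ⁻¹ i))) = θ := by
      funext i; simp
    simp only [h1, hSperm σ hσ θ]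
    ring_nf
  intro A B hA hB
  rw [main A B hA hB, main B A hB hA]
  have reindex : ∑ σ ∈ SK, (∫⁻ θ, A.indicator 1 θ *
        (B.indicator 1 (fun i => θ (σ i)) *
          (π (fun i => θ (σ i)) * π θ / S θ)) ∂μprK)
      = ∑ σ ∈ SK, (∫⁻ θ, B.indicator 1 θ *
          (A.indicator 1 (fun i => θ (σ i)) *
            (π (fun i => θ (σ i)) * π θ / S θ)) ∂μprK) := by
    rw [Finset.sum_congr rfl fun σ hσ => swap σ hσ A B hA hB]
    refine Finset.sum_equiv (Equiv.inv (Equiv.Perm (Fin K))) (fun σ => ?_) (fun σ hσ => rfl)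
    · constructor
      · intro h; exact hSKinv σ h
      · intro h; simpa using hSKinv _ h
  exact reindex
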